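/- arXiv:0911.2294 — 2 statements merged into one kernel-verified Lean document; each statement's English description precedes it below -/
import Mathlib

section
/- Let Ω ⊂ ℝ² be a bounded simply connected domain and τ⁰ the solution of −Δτ⁰ = 1 in Ω with τ⁰ = 0 on ∂Ω. Suppose τ⁰ is radial about some point x₀ ∈ Ω in a neighborhood of x₀, i.e., τ⁰(x) = g(|x − x₀|) near x₀ for some function g. Then Ω is a disc centered at x₀ and τ⁰(x) = (R² − |x − x₀|²)/4 where R is the radius of Ω. -/
open MeasureTheory RealInnerProductSpace Bornology Real
open scoped ENNReal NNReal

noncomputable section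

/-- Euclidean space `ℝⁿ`. -/
abbrev En (n : ℕ) := EuclideanSpace ℝ (Fin n)

/-- The Laplacian `Δf = ∑ᵢ ∂²f/∂xᵢ²`. -/
def lap {n : ℕ} (f : En n → ℝ) (x : En n) : ℝ :=
  ∑ i, fderiv ℝ (fun y => fderiv ℝ f y (EuclideanSpace.single i 1)) x (EuclideanSpace.single i 1)

/-- The divergence `∇·v = ∑ᵢ ∂vᵢ/∂xᵢ`. -/
def divg {n : ℕ} (v : En n → En n) (x : En n) : ℝ :=
  ∑ i, fderiv ℝ (fun y => v y i) x (EuclideanSpace.single i 1)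

section helpers
-- helper: decompose a real-CLM on ℂ
lemma clm_decomp {E : Type*} [NormedAddCommGroup E] [NormedSpace ℝ E]
    (T : ℂ →L[ℝ] E) (v : ℂ) : T v = v.re • T 1 + v.im • T Complex.I := by
  rw [← _root_.map_smul, ← _root_.map_smul, ← _root_.map_add]
  congr 1
  simp only [Complex.real_smul, Complex.ofReal_mul]
  rw [mul_one, Complex.re_add_im]

-- the isometry
def P : ℂ ≃ₗᵢ[ℝ] En 2 := Complex.orthonormalBasisOneI.repr

lemma P_one : P 1 = EuclideanSpace.single 0 1 := by
  ext i
  fin_cases i <;> simp [P, EuclideanSpace.single_apply]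

lemma P_I : P Complex.I = EuclideanSpace.single 1 1 := by
  ext i
  fin_cases i <;> simp [P, EuclideanSpace.single_apply]


section transfer

variable {Ω : Set (En 2)} (hΩo : IsOpen Ω) {τ : En 2 → ℝ} (hτC : ContDiffOn ℝ 2 τ Ω)

include hΩo hτC

-- first derivative transfer, as an eventual statement
lemma fderiv_comp_P {z : ℂ} (hz : P z ∈ Ω) :
    fderiv ℝ (fun y => τ (P y)) z
      = (fderiv ℝ τ (P z)).comp (P : ℂ →L[ℝ] En 2) := by
  have hτd : DifferentiableAt ℝ τ (P z) :=
    (hτC.contDiffAt (hΩo.mem_nhds hz)).differentiableAt two_ne_zero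
  exact (hτd.hasFDerivAt.comp z (P.hasFDerivAt (x := z))).fderiv

lemma sndTransfer {z : ℂ} (hz : P z ∈ Ω) (v w : ℂ) :
    fderiv ℝ (fderiv ℝ (fun y => τ (P y))) z v w
      = fderiv ℝ (fun y => fderiv ℝ τ y (P w)) (P z) (P v) := by
  classical
  set x := P z with hx
  have hτx : ContDiffAt ℝ 2 τ x := hτC.contDiffAt (hΩo.mem_nhds hz)
  have hτ1 : ContDiffAt ℝ 1 (fderiv ℝ τ) x := hτx.fderiv_right (by norm_num)
  have hτ1d : DifferentiableAt ℝ (fderiv ℝ τ) x := hτ1.differentiableAt one_ne_zero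
  -- the second derivative of τ at x
  set A := fderiv ℝ (fderiv ℝ τ) x with hA
  -- RHS equals A (P v) (P w)
  have hRHS : fderiv ℝ (fun y => fderiv ℝ τ y (P w)) x (P v) = A (P v) (P w) := by
    have : HasFDerivAt (fun y => fderiv ℝ τ y (P w))
        ((ContinuousLinearMap.apply ℝ ℝ (P w)).comp A) x :=
      (ContinuousLinearMap.apply ℝ ℝ (P w)).hasFDerivAt.comp x hτ1d.hasFDerivAt
    rw [this.fderiv]; rfl
  -- u = τ ∘ P ; compute its second derivative
  set u : ℂ → ℝ := fun y => τ (P y) with hu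
  have hloc : ∀ᶠ y in nhds z, fderiv ℝ u y = (fderiv ℝ τ (P y)).comp (P : ℂ →L[ℝ] En 2) := by
    have hV : IsOpen ((⇑P) ⁻¹' Ω) := hΩo.preimage P.continuous
    filter_upwards [hV.mem_nhds (by simpa using hz)] with y hy
    exact fderiv_comp_P hΩo hτC hy
  -- fderiv u = (compRight) ∘ (fderiv τ) ∘ P  eventually; differentiate
  have hcomp : HasFDerivAt (fun y => (fderiv ℝ τ (P y)).comp (P : ℂ →L[ℝ] En 2))
      (((ContinuousLinearMap.compL ℝ ℂ (En 2) ℝ).flip (P : ℂ →L[ℝ] En 2)).comp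
        (A.comp (P : ℂ →L[ℝ] En 2))) z := by
    have h1 : HasFDerivAt (fun y => fderiv ℝ τ (P y)) (A.comp (P : ℂ →L[ℝ] En 2)) z :=
      hτ1d.hasFDerivAt.comp z (P.hasFDerivAt (x := z))
    exact (((ContinuousLinearMap.compL ℝ ℂ (En 2) ℝ).flip
      ((P : ℂ →L[ℝ] En 2))).hasFDerivAt).comp z h1
  have hfd : HasFDerivAt (fderiv ℝ u)
      (((ContinuousLinearMap.compL ℝ ℂ (En 2) ℝ).flip (P : ℂ →L[ℝ] En 2)).comp
        (A.comp (P : ℂ →L[ℝ] En 2))) z := by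
    apply hcomp.congr_of_eventuallyEq
    filter_upwards [hloc] with y hy using hy
  rw [hfd.fderiv]
  rw [hRHS]
  rfl

end transfer


-- conjugation as a real CLM
def conjCLM : ℂ →L[ℝ] ℂ := Complex.conjCLE.toContinuousLinearMap

-- evaluation functional ψ T = T 1 - (T I) * I
def ψ : (ℂ →L[ℝ] ℝ) →L[ℝ] ℂ :=
  Complex.ofRealCLM.comp (ContinuousLinearMap.apply ℝ ℝ (1 : ℂ))
    + (-Complex.I) • (Complex.ofRealCLM.comp (ContinuousLinearMap.apply ℝ ℝ Complex.I))

lemma ψ_apply (T : ℂ →L[ℝ] ℝ) : ψ T = (T 1 : ℝ) - (T Complex.I : ℝ) * Complex.I := by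
  simp [ψ]
  ring

/-- If `u` is `C²` on open `U` with `Δu = -1`, then
`F w = uₓ - i u_y + conj(w - z₀)/2` is complex-differentiable on `U`. -/
lemma F_holo {U : Set ℂ} (hU : IsOpen U) {u : ℂ → ℝ} (hu : ContDiffOn ℝ 2 u U)
    (hlap : ∀ z ∈ U, fderiv ℝ (fderiv ℝ u) z 1 1
      + fderiv ℝ (fderiv ℝ u) z Complex.I Complex.I = -1)
    (z₀ : ℂ) {z : ℂ} (hz : z ∈ U) :
    DifferentiableAt ℂ (fun w => ψ (fderiv ℝ u w)
      + (2⁻¹ : ℂ) • (starRingEnd ℂ) (w - z₀)) z := by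
  have hu2 : ContDiffAt ℝ 2 u z := hu.contDiffAt (hU.mem_nhds hz)
  have hu1 : ContDiffAt ℝ 1 (fderiv ℝ u) z := hu2.fderiv_right (by norm_num)
  have hBd : DifferentiableAt ℝ (fderiv ℝ u) z := hu1.differentiableAt one_ne_zero
  set B := fderiv ℝ (fderiv ℝ u) z with hBdef
  have hB : HasFDerivAt (fderiv ℝ u) B z := hBd.hasFDerivAt
  -- symmetry of the second derivative
  have hsym : ∀ v w : ℂ, B v w = B w v := by
    intro v w
    refine second_derivative_symmetric_of_eventually (f := u) ?_ hB v w
    filter_upwards [hU.mem_nhds hz] with y hy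
    exact ((hu.contDiffAt (hU.mem_nhds hy)).differentiableAt two_ne_zero).hasFDerivAt
  -- real derivative of F
  have hG : HasFDerivAt (fun w => ψ (fderiv ℝ u w)) (ψ.comp B) z :=
    ψ.hasFDerivAt.comp z hB
  have hc0 : HasFDerivAt (fun w : ℂ => (starRingEnd ℂ) (w - z₀)) conjCLM z := by
    have h1 : HasFDerivAt (fun w : ℂ => w - z₀) (ContinuousLinearMap.id ℝ ℂ) z :=
      (hasFDerivAt_id z).sub_const z₀
    have h2 := (Complex.conjCLE.hasFDerivAt).comp z h1
    simpa [conjCLM, Function.comp_def] using h2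
  have hc : HasFDerivAt (fun w : ℂ => (2⁻¹ : ℂ) • (starRingEnd ℂ) (w - z₀))
      ((2⁻¹ : ℂ) • conjCLM) z := by exact hc0.const_smul (2⁻¹ : ℂ)
  have hF : HasFDerivAt (fun w => ψ (fderiv ℝ u w)
      + (2⁻¹ : ℂ) • (starRingEnd ℂ) (w - z₀)) (ψ.comp B + (2⁻¹ : ℂ) • conjCLM) z :=
    hG.add hc
  set F' : ℂ →L[ℝ] ℂ := ψ.comp B + (2⁻¹ : ℂ) • conjCLM with hF'def
  set m : ℂ := F' 1 with hm
  -- key identity from the PDE and symmetry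
  have hlapz := hlap z hz
  have hkey : F' Complex.I = Complex.I * m := by
    have e1 : F' 1 = ((B 1 1 : ℝ) : ℂ) - (B 1 Complex.I : ℝ) * Complex.I + 2⁻¹ := by
      simp [hF'def, ψ_apply, conjCLM]
      try ring
    have e2 : F' Complex.I = ((B Complex.I 1 : ℝ) : ℂ)
        - (B Complex.I Complex.I : ℝ) * Complex.I - 2⁻¹ * Complex.I := by
      simp [hF'def, ψ_apply, conjCLM, Complex.conj_I]
      try ring
    have h3 : (B Complex.I Complex.I : ℝ) = -1 - B 1 1 := by linarith
    rw [e2, hm, e1, h3, hsym Complex.I 1]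
    simp [Complex.ext_iff]
    ring
  -- F' is the restriction of a ℂ-linear map
  have hrs : (m • ContinuousLinearMap.id ℂ ℂ).restrictScalars ℝ = F' := by
    ext v
    have hd : F' v = (v.re : ℂ) * m + (v.im : ℂ) * (Complex.I * m) := by
      rw [clm_decomp F' v, hkey, ← hm]
      simp [Complex.real_smul]
    show m • v = F' v
    rw [hd, show ((v.re : ℂ) * m + (v.im : ℂ) * (Complex.I * m))
      = ((v.re : ℂ) + (v.im : ℂ) * Complex.I) * m by ring, Complex.re_add_im]
    simp [smul_eq_mul, mul_comm]
  exact (hasFDerivAt_of_restrictScalars ℝ hF hrs).differentiableAt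


/-- Angular derivative of a radial function vanishes. -/
lemma radial_aux {u : ℂ → ℝ} {z₀ : ℂ} {ε : ℝ} {g : ℝ → ℝ}
    (hu : ∀ x ∈ Metric.ball z₀ ε, u x = g ‖x - z₀‖) {z : ℂ} (hz : z ∈ Metric.ball z₀ ε)
    (hd : DifferentiableAt ℝ u z) :
    fderiv ℝ u z ((z - z₀) * Complex.I) = 0 := by
  set w := z - z₀ with hw
  -- the circle curve
  set c : ℝ → ℂ := fun θ => z₀ + w * (Real.cos θ + Real.sin θ * Complex.I) with hc
  have hn : ∀ θ, ‖c θ - z₀‖ = ‖w‖ := by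
    intro θ
    simp only [hc, add_sub_cancel_left, norm_mul]
    have : ‖(Real.cos θ : ℂ) + Real.sin θ * Complex.I‖ = 1 := by
      rw [Complex.ofReal_cos, Complex.ofReal_sin]
      exact Complex.norm_cos_add_sin_mul_I θ
    rw [this, mul_one]
  have hcmem : ∀ θ, c θ ∈ Metric.ball z₀ ε := by
    intro θ
    have := Metric.mem_ball.mp hz
    rw [Metric.mem_ball, dist_eq_norm, hn]
    rwa [dist_eq_norm] at this
  have hconst : ∀ θ, u (c θ) = g ‖w‖ := by
    intro θ
    rw [hu _ (hcmem θ), hn]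
  -- derivative of c at 0
  have hcd : HasDerivAt c (w * Complex.I) 0 := by
    have h1 : HasDerivAt (fun θ : ℝ => (Real.cos θ : ℂ)) (-(Real.sin 0) : ℝ) 0 :=
      (Real.hasDerivAt_cos 0).ofReal_comp
    have h2 : HasDerivAt (fun θ : ℝ => (Real.sin θ : ℂ) * Complex.I)
        ((Real.cos 0 : ℝ) * Complex.I) 0 := by
      have := ((Real.hasDerivAt_sin 0).ofReal_comp).mul_const Complex.I
      simpa using this
    have h3 := (h1.add h2).const_mul w
    have h4 := h3.const_add z₀
    refine h4.congr_deriv ?_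
    simp [Complex.ofReal_zero]
  have hc0 : c 0 = z := by simp [hc, hw]
  -- u ∘ c is constant
  have hucd : HasDerivAt (fun θ => u (c θ)) (fderiv ℝ u z (w * Complex.I)) 0 := by
    have hd2 : HasFDerivAt u (fderiv ℝ u z) (c 0) := by rw [hc0]; exact hd.hasFDerivAt
    have := hd2.comp_hasDerivAt 0 hcd
    exact this
  have : (fun θ => u (c θ)) = fun _ => g ‖w‖ := funext hconst
  have h0 : HasDerivAt (fun θ => u (c θ)) 0 0 := by
    rw [this]; exact hasDerivAt_const 0 _
  exact hucd.unique h0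

/-- A holomorphic function with vanishing imaginary part on an open convex set is constant. -/
lemma const_im {f : ℂ → ℂ} {s : Set ℂ} (hs : IsOpen s) (hconv : Convex ℝ s)
    (hf : DifferentiableOn ℂ f s) (him : ∀ z ∈ s, (f z).im = 0)
    {a b : ℂ} (ha : a ∈ s) (hb : b ∈ s) : f a = f b := by
  apply hconv.is_const_of_fderivWithin_eq_zero (𝕜 := ℝ) (hf.restrictScalars ℝ) _ ha hb
  intro z hz
  have hfz : DifferentiableAt ℂ f z := (hf z hz).differentiableAt (hs.mem_nhds hz)
  set d : ℂ := deriv f z with hd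
  have hder : HasFDerivAt f (((ContinuousLinearMap.id ℂ ℂ).smulRight d).restrictScalars ℝ) z :=
    (hfz.hasDerivAt.hasFDerivAt).restrictScalars ℝ
  -- the imaginary part is locally zero
  have him0 : HasFDerivAt (fun w => (f w).im) (0 : ℂ →L[ℝ] ℝ) z := by
    have heq : (fun w => (f w).im) =ᶠ[nhds z] fun _ => (0 : ℝ) := by
      filter_upwards [hs.mem_nhds hz] with y hy using him y hy
    exact (hasFDerivAt_const (0 : ℝ) z).congr_of_eventuallyEq (heq)
  have him1 : HasFDerivAt (fun w => (f w).im)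
      (Complex.imCLM.comp (((ContinuousLinearMap.id ℂ ℂ).smulRight d).restrictScalars ℝ)) z :=
    Complex.imCLM.hasFDerivAt.comp z hder
  have hzero := him1.unique him0
  have h1 : (d * 1).im = 0 := by
    have := congrFun (congrArg DFunLike.coe hzero) 1
    simpa using this
  have h2 : (d * Complex.I).im = 0 := by
    have := congrFun (congrArg DFunLike.coe hzero) Complex.I
    simpa using this
  have hd0 : d = 0 := by
    apply Complex.ext
    · simpa using h2
    · simpa using h1
  -- conclude the real fderiv within is zero
  have : fderiv ℝ f z = 0 := by
    rw [hder.fderiv, hd0]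
    ext v
    simp
  rw [fderivWithin_of_isOpen hs hz, this]

end helpers

/-- If the torsion function `τ⁰` of a bounded simply connected planar domain
`Ω` is radial about some `x₀ ∈ Ω` in a neighborhood of `x₀`, then `Ω` is a disc centered at
`x₀` of some radius `R` and `τ⁰(x) = (R² − |x − x₀|²)/4` on `Ω`. -/
theorem stmt4 (Ω : Set (En 2)) (hΩo : IsOpen Ω) (hΩb : IsBounded Ω) (hΩc : IsConnected Ω)
    (hΩs : SimplyConnectedSpace Ω)
    (τ : En 2 → ℝ) (hτC : ContDiffOn ℝ 2 τ Ω) (hcont : ContinuousOn τ (closure Ω))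
    (hpde : ∀ x ∈ Ω, -lap τ x = 1) (hbd : ∀ x ∈ frontier Ω, τ x = 0)
    (x₀ : En 2) (hx₀ : x₀ ∈ Ω) (g : ℝ → ℝ) (ε : ℝ) (hε : 0 < ε)
    (hball : Metric.ball x₀ ε ⊆ Ω)
    (hrad : ∀ x ∈ Metric.ball x₀ ε, τ x = g ‖x - x₀‖) :
    ∃ R > 0, Ω = Metric.ball x₀ R ∧ ∀ x ∈ Ω, τ x = (R ^ 2 - ‖x - x₀‖ ^ 2) / 4 := by
  classical
  -- ########## Step 0 : setup on the complex side ##########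
  set z₀ : ℂ := P.symm x₀ with hz₀def
  have hPz₀ : P z₀ = x₀ := by simp [hz₀def]
  set u : ℂ → ℝ := fun z => τ (P z) with hudef
  set V : Set ℂ := (⇑P) ⁻¹' Ω with hVdef
  have hVo : IsOpen V := hΩo.preimage P.continuous
  have hz₀V : z₀ ∈ V := by simpa [hVdef, hPz₀] using hx₀
  have huC : ContDiffOn ℝ 2 u V := hτC.comp (P.contDiff.contDiffOn) (fun z hz => hz)
  have hnormP : ∀ z : ℂ, ‖P z - x₀‖ = ‖z - z₀‖ := by
    intro z
    rw [← hPz₀, ← _root_.map_sub, P.norm_map]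
  have hballC : Metric.ball z₀ ε ⊆ V := by
    intro z hz
    apply hball
    rw [Metric.mem_ball, dist_eq_norm, hnormP]
    rwa [Metric.mem_ball, dist_eq_norm] at hz
  have hurad : ∀ z ∈ Metric.ball z₀ ε, u z = g ‖z - z₀‖ := by
    intro z hz
    rw [hudef]
    simp only
    rw [hrad (P z) ?_, hnormP]
    rw [Metric.mem_ball, dist_eq_norm, hnormP]
    rwa [Metric.mem_ball, dist_eq_norm] at hz
  -- ########## Step 1 : the laplacian of u is -1 on V ##########
  have hlapV : ∀ z ∈ V, fderiv ℝ (fderiv ℝ u) z 1 1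
      + fderiv ℝ (fderiv ℝ u) z Complex.I Complex.I = -1 := by
    intro z hz
    have hz' : P z ∈ Ω := hz
    have h1 := sndTransfer hΩo hτC hz' 1 1
    have h2 := sndTransfer hΩo hτC hz' Complex.I Complex.I
    rw [hudef]
    rw [h1, h2, P_one, P_I]
    have := hpde (P z) hz'
    rw [lap, Fin.sum_univ_two] at this
    linarith
  -- ########## Step 2 : F is holomorphic on V and vanishes near z₁ ##########
  set F : ℂ → ℂ := fun w => ψ (fderiv ℝ u w) + (2⁻¹ : ℂ) • (starRingEnd ℂ) (w - z₀) with hFdef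
  have hFd : DifferentiableOn ℂ F V := fun z hz =>
    (F_holo hVo huC hlapV z₀ hz).differentiableWithinAt
  -- the angular derivative vanishes on the ball, so Im (F z * (z - z₀)) = 0 there
  have him : ∀ z ∈ Metric.ball z₀ ε, ((F z) * (z - z₀)).im = 0 := by
    intro z hz
    have hdz : DifferentiableAt ℝ u z :=
      ((huC.contDiffAt (hVo.mem_nhds (hballC hz))).differentiableAt two_ne_zero)
    have hang := radial_aux hurad hz hdz
    set T := fderiv ℝ u z with hT
    set w : ℂ := z - z₀ with hw
    have hdec : T (w * Complex.I) = (w * Complex.I).re • T 1 + (w * Complex.I).im • T Complex.I :=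
      clm_decomp T _
    have hre : (w * Complex.I).re = -w.im := by simp
    have him' : (w * Complex.I).im = w.re := by simp
    rw [hdec, hre, him'] at hang
    have this2 : (F z * w).im = T 1 * w.im - T Complex.I * w.re := by
      have hFz : F z = (↑(T 1) - ↑(T Complex.I) * Complex.I + (2⁻¹ : ℂ) * (starRingEnd ℂ) w) := by
        rw [hFdef]
        simp only [ψ_apply, smul_eq_mul]
        rfl
      rw [hFz]
      simp only [Complex.add_im, Complex.sub_im, Complex.mul_im, Complex.mul_re,
        Complex.I_re, Complex.I_im, Complex.ofReal_re, Complex.ofReal_im,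
        Complex.conj_re, Complex.conj_im, Complex.add_re, Complex.sub_re, Complex.inv_re,
        Complex.inv_im]
      simp [Complex.normSq_apply]
      ring
    rw [this2]
    simp only [smul_eq_mul] at hang
    linarith
  -- φ := F * (· - z₀) is holomorphic and real on the ball, hence constant, hence 0
  have hφ0 : ∀ z ∈ Metric.ball z₀ ε, F z * (z - z₀) = 0 := by
    intro z hz
    have := const_im (Metric.isOpen_ball) (convex_ball z₀ ε)
      (fun y hy => ((hFd y (hballC hy)).differentiableAt
          (hVo.mem_nhds (hballC hy))).differentiableWithinAt.mul
          ((differentiableAt_id.sub (differentiableAt_const z₀)).differentiableWithinAt))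
      him hz (Metric.mem_ball_self hε)
    simpa using this
  have hVconn : IsPreconnected V := by
    have himg : V = (⇑P.symm) '' Ω := by
      ext z
      simp only [hVdef, Set.mem_preimage, Set.mem_image]
      constructor
      · intro h; exact ⟨P z, h, by simp⟩
      · rintro ⟨x, hx, rfl⟩; simpa using hx
    rw [himg]
    exact (hΩc.image _ P.symm.continuous.continuousOn).isPreconnected
  -- F vanishes identically on V by the identity theorem
  have hF0 : Set.EqOn F 0 V := by
    set z₁ : ℂ := z₀ + (ε / 2 : ℝ) with hz₁def
    have hdist : dist z₁ z₀ = ε / 2 := by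
      rw [hz₁def, dist_eq_norm, add_sub_cancel_left]
      simp [abs_of_pos hε]
    have hz₁ball : z₁ ∈ Metric.ball z₀ ε := by
      rw [Metric.mem_ball, hdist]; linarith
    have hz₁V : z₁ ∈ V := hballC hz₁ball
    have hev : F =ᶠ[nhds z₁] 0 := by
      have hsub : Metric.ball z₁ (ε / 4) ⊆ Metric.ball z₀ ε \ {z₀} := by
        intro y hy
        rw [Metric.mem_ball] at hy
        constructor
        · rw [Metric.mem_ball]
          have h3 := dist_triangle y z₁ z₀
          rw [hdist] at h3
          linarith
        · simp only [Set.mem_singleton_iff]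
          intro hcon
          rw [hcon, dist_comm, hdist] at hy
          linarith
      filter_upwards [Metric.ball_mem_nhds z₁ (show (0:ℝ) < ε/4 by linarith)] with y hy
      obtain ⟨hy1, hy2⟩ := hsub hy
      have := hφ0 y hy1
      rcases mul_eq_zero.mp this with h | h
      · exact h
      · exfalso; exact hy2 (by rwa [sub_eq_zero] at h)
    exact (hFd.analyticOnNhd hVo).eqOn_zero_of_preconnected_of_eventuallyEq_zero hVconn hz₁V hev

  -- ########## Step 3 : the gradient identities on V ##########
  have hgrad : ∀ z ∈ V, (fderiv ℝ u z 1 = -(z - z₀).re / 2)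
      ∧ (fderiv ℝ u z Complex.I = -(z - z₀).im / 2) := by
    intro z hz
    have h := hF0 hz
    rw [hFdef] at h
    simp only [Pi.zero_apply, ψ_apply, smul_eq_mul] at h
    have hre := congrArg Complex.re h
    have him2 := congrArg Complex.im h
    simp only [Complex.add_re, Complex.add_im, Complex.sub_re, Complex.sub_im,
      Complex.mul_re, Complex.mul_im, Complex.I_re, Complex.I_im,
      Complex.ofReal_re, Complex.ofReal_im, Complex.conj_re, Complex.conj_im,
      Complex.inv_re, Complex.inv_im, Complex.zero_re, Complex.zero_im,
      Complex.normSq_apply] at hre him2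
    norm_num at hre him2
    simp only [Complex.sub_re, Complex.sub_im]
    constructor <;> linarith
  -- ########## Step 4 : u + |z - z₀|²/4 is constant on V ##########
  set K : ℂ → ℝ := fun z => u z + 4⁻¹ * ((z - z₀).re ^ 2 + (z - z₀).im ^ 2) with hKdef
  have hKderiv : ∀ z ∈ V, HasFDerivAt K (0 : ℂ →L[ℝ] ℝ) z := by
    intro z hz
    have hdz : DifferentiableAt ℝ u z :=
      (huC.contDiffAt (hVo.mem_nhds hz)).differentiableAt two_ne_zero
    have hre : HasFDerivAt (fun w : ℂ => (w - z₀).re) Complex.reCLM z := by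
      have := Complex.reCLM.hasFDerivAt.comp z ((hasFDerivAt_id z).sub_const z₀)
      simpa [Function.comp_def] using this
    have him3 : HasFDerivAt (fun w : ℂ => (w - z₀).im) Complex.imCLM z := by
      have := Complex.imCLM.hasFDerivAt.comp z ((hasFDerivAt_id z).sub_const z₀)
      simpa [Function.comp_def] using this
    have hre2 : HasFDerivAt (fun w : ℂ => (w - z₀).re ^ 2)
        ((2 * (z - z₀).re) • Complex.reCLM) z := by
      have h := hre.mul hre
      have heq : (fun w : ℂ => (w - z₀).re * (w - z₀).re) = fun w : ℂ => (w - z₀).re ^ 2 := by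
        funext w; ring
      rw [← heq]
      refine h.congr_fderiv ?_
      ext v
      simp only [ContinuousLinearMap.smul_apply, ContinuousLinearMap.add_apply, smul_eq_mul]
      ring
    have him2' : HasFDerivAt (fun w : ℂ => (w - z₀).im ^ 2)
        ((2 * (z - z₀).im) • Complex.imCLM) z := by
      have h := him3.mul him3
      have heq : (fun w : ℂ => (w - z₀).im * (w - z₀).im) = fun w : ℂ => (w - z₀).im ^ 2 := by
        funext w; ring
      rw [← heq]
      refine h.congr_fderiv ?_
      ext v
      simp only [ContinuousLinearMap.smul_apply, ContinuousLinearMap.add_apply, smul_eq_mul]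
      ring
    have hq : HasFDerivAt (fun w : ℂ => 4⁻¹ * ((w - z₀).re ^ 2 + (w - z₀).im ^ 2))
        ((4⁻¹ : ℝ) • (((2 * (z - z₀).re) • Complex.reCLM)
          + ((2 * (z - z₀).im) • Complex.imCLM))) z := (hre2.add him2').const_mul _
    have htot := hdz.hasFDerivAt.add hq
    have hzero : fderiv ℝ u z + (4⁻¹ : ℝ) • (((2 * (z - z₀).re) • Complex.reCLM)
        + ((2 * (z - z₀).im) • Complex.imCLM)) = 0 := by
      ext v
      obtain ⟨h1, h2⟩ := hgrad z hz
      simp only [ContinuousLinearMap.add_apply, ContinuousLinearMap.smul_apply,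
        ContinuousLinearMap.zero_apply, Complex.reCLM_apply, Complex.imCLM_apply, smul_eq_mul]
      rw [clm_decomp (fderiv ℝ u z) v, h1, h2]
      simp only [smul_eq_mul]
      ring
    rw [hzero] at htot
    exact htot
  have hKloc : ∀ z ∈ V, ∀ᶠ y in nhds z, K y = K z := by
    intro z hz
    obtain ⟨δ, hδpos, hδ⟩ := Metric.isOpen_iff.mp hVo z hz
    filter_upwards [Metric.ball_mem_nhds z hδpos] with y hy
    exact (convex_ball z δ).is_const_of_fderivWithin_eq_zero (𝕜 := ℝ) (f := K)
      (fun p hp => ((hKderiv p (hδ hp)).differentiableAt).differentiableWithinAt)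
      (fun p hp => by
        rw [fderivWithin_of_isOpen Metric.isOpen_ball hp, (hKderiv p (hδ hp)).fderiv])
      hy (Metric.mem_ball_self hδpos)
  have hKconst : ∀ z ∈ V, K z = K z₀ := by
    have hAo : IsOpen {z | z ∈ V ∧ K z = K z₀} := by
      rw [isOpen_iff_mem_nhds]
      rintro z ⟨hzV, hzK⟩
      filter_upwards [hKloc z hzV, hVo.mem_nhds hzV] with y h1 h2
      exact ⟨h2, by rw [h1, hzK]⟩
    have hBo : IsOpen {z | z ∈ V ∧ K z ≠ K z₀} := by
      rw [isOpen_iff_mem_nhds]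
      rintro z ⟨hzV, hzK⟩
      filter_upwards [hKloc z hzV, hVo.mem_nhds hzV] with y h1 h2
      exact ⟨h2, by rw [h1]; exact hzK⟩
    have hsub : V ⊆ {z | z ∈ V ∧ K z = K z₀} ∪ {z | z ∈ V ∧ K z ≠ K z₀} := by
      intro z hz
      by_cases h : K z = K z₀
      · exact Or.inl ⟨hz, h⟩
      · exact Or.inr ⟨hz, h⟩
    have hdisj : Disjoint {z | z ∈ V ∧ K z = K z₀} {z | z ∈ V ∧ K z ≠ K z₀} := by
      rw [Set.disjoint_left]
      rintro z ⟨_, h⟩ ⟨_, h'⟩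
      exact h' h
    have := hVconn.subset_left_of_subset_union hAo hBo hdisj hsub
      ⟨z₀, hz₀V, hz₀V, rfl⟩
    exact fun z hz => (this hz).2
  -- ########## Step 5 : explicit formula for τ on Ω and on the closure ##########
  have hKz₀ : K z₀ = τ x₀ := by
    rw [hKdef]
    simp [hudef, hPz₀]
  have hform : ∀ x ∈ Ω, τ x = τ x₀ - ‖x - x₀‖ ^ 2 / 4 := by
    intro x hx
    have hzV : (P.symm x) ∈ V := by
      simp only [hVdef, Set.mem_preimage]
      simpa using hx
    have hKx := hKconst _ hzV
    rw [hKz₀, hKdef] at hKx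
    simp only at hKx
    have hux : u (P.symm x) = τ x := by
      rw [hudef]; simp
    have hnorm1 : ‖(P.symm x) - z₀‖ = ‖x - x₀‖ := by
      rw [hz₀def, ← _root_.map_sub, P.symm.norm_map]
    have hnorm2 : ((P.symm x) - z₀).re ^ 2 + ((P.symm x) - z₀).im ^ 2 = ‖x - x₀‖ ^ 2 := by
      rw [← hnorm1, Complex.sq_norm, Complex.normSq_apply]
      ring
    rw [hux, hnorm2] at hKx
    linarith
  have hclosure : ∀ y ∈ closure Ω, τ y = τ x₀ - ‖y - x₀‖ ^ 2 / 4 := by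
    intro y hy
    have hne : (nhdsWithin y Ω).NeBot := mem_closure_iff_nhdsWithin_neBot.mp hy
    have h1 : Filter.Tendsto τ (nhdsWithin y Ω) (nhds (τ y)) :=
      (hcont y hy).mono subset_closure
    have hc2 : Continuous (fun x : En 2 => τ x₀ - ‖x - x₀‖ ^ 2 / 4) :=
      continuous_const.sub (((continuous_id.sub continuous_const).norm.pow 2).div_const 4)
    have h2 : Filter.Tendsto (fun x : En 2 => τ x₀ - ‖x - x₀‖ ^ 2 / 4) (nhdsWithin y Ω)
        (nhds (τ x₀ - ‖y - x₀‖ ^ 2 / 4)) := (hc2.tendsto y).mono_left nhdsWithin_le_nhds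
    have h3 : Filter.Tendsto τ (nhdsWithin y Ω) (nhds (τ x₀ - ‖y - x₀‖ ^ 2 / 4)) := by
      apply h2.congr'
      filter_upwards [self_mem_nhdsWithin] with x hx using (hform x hx).symm
    exact tendsto_nhds_unique h1 h3
  -- ########## Step 6 : the geometry of Ω ##########
  have hex : ∃ y, y ∈ frontier Ω := by
    by_contra h
    push_neg at h
    have hfe : frontier Ω = ∅ := Set.eq_empty_iff_forall_notMem.mpr h
    rcases frontier_eq_empty_iff.mp hfe with h' | h'
    · rw [h'] at hx₀; exact hx₀
    · obtain ⟨r, hr⟩ := hΩb.subset_closedBall x₀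
      have hmem : x₀ + EuclideanSpace.single 0 (|r| + 1) ∈ Metric.closedBall x₀ r :=
        hr (h' ▸ Set.mem_univ _)
      rw [Metric.mem_closedBall, dist_eq_norm, add_sub_cancel_left,
        EuclideanSpace.norm_single] at hmem
      have : |r| + 1 ≤ r := le_trans (le_abs_self _) hmem
      linarith [abs_nonneg r, le_abs_self r]
  obtain ⟨y₀, hy₀⟩ := hex
  have hy₀c : y₀ ∈ closure Ω := frontier_subset_closure hy₀
  have hy₀sq : ‖y₀ - x₀‖ ^ 2 = 4 * τ x₀ := by
    have := hclosure y₀ hy₀c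
    rw [hbd y₀ hy₀] at this
    linarith
  have hy₀ne : y₀ ≠ x₀ := by
    intro h
    have h2 : y₀ ∉ Ω := by
      rw [hΩo.frontier_eq] at hy₀
      exact hy₀.2
    exact h2 (h ▸ hx₀)
  have hτx₀pos : 0 < τ x₀ := by
    have h1 : 0 < ‖y₀ - x₀‖ := norm_pos_iff.mpr (sub_ne_zero.mpr hy₀ne)
    nlinarith
  set R := Real.sqrt (4 * τ x₀) with hR
  have hRpos : 0 < R := Real.sqrt_pos.mpr (by linarith)
  have hR2 : R ^ 2 = 4 * τ x₀ := Real.sq_sqrt (by linarith)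
  have hfr : ∀ y ∈ frontier Ω, ‖y - x₀‖ = R := by
    intro y hy
    have h1 : ‖y - x₀‖ ^ 2 = 4 * τ x₀ := by
      have := hclosure y (frontier_subset_closure hy)
      rw [hbd y hy] at this
      linarith
    rw [hR, ← h1, Real.sqrt_sq (norm_nonneg _)]
  -- no interior point maximizes the distance to x₀
  have hnomax : ∀ y ∈ Ω, ∃ p ∈ Ω, ‖y - x₀‖ < ‖p - x₀‖ := by
    intro y hy
    obtain ⟨δ, hδpos, hδ⟩ := Metric.isOpen_iff.mp hΩo y hy
    by_cases hcase : y = x₀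
    · refine ⟨y + EuclideanSpace.single 0 (δ / 2), hδ ?_, ?_⟩
      · rw [Metric.mem_ball, dist_eq_norm, add_sub_cancel_left, EuclideanSpace.norm_single,
          Real.norm_eq_abs, abs_of_pos (show (0:ℝ) < δ / 2 by linarith)]
        linarith
      · rw [hcase, sub_self, norm_zero, add_sub_cancel_left, EuclideanSpace.norm_single,
          Real.norm_eq_abs, abs_of_pos (show (0:ℝ) < δ / 2 by linarith)]
        linarith
    · have hnp : 0 < ‖y - x₀‖ := norm_pos_iff.mpr (sub_ne_zero.mpr hcase)
      set d : ℝ := δ / 2 / ‖y - x₀‖ with hd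
      have hdpos : 0 < d := by positivity
      refine ⟨y + d • (y - x₀), hδ ?_, ?_⟩
      · rw [Metric.mem_ball, dist_eq_norm, add_sub_cancel_left, norm_smul,
          Real.norm_eq_abs, abs_of_pos hdpos, hd]
        rw [div_mul_cancel₀ _ (ne_of_gt hnp)]
        linarith
      · have heq : y + d • (y - x₀) - x₀ = (1 + d) • (y - x₀) := by
          rw [add_smul, one_smul]
          abel
        rw [heq, norm_smul, Real.norm_eq_abs, abs_of_pos (by linarith)]
        nlinarith
  have hsubset : Ω ⊆ Metric.ball x₀ R := by
    have hcomp : IsCompact (closure Ω) := hΩb.isCompact_closure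
    have hcont2 : ContinuousOn (fun x : En 2 => ‖x - x₀‖) (closure Ω) :=
      ((continuous_id.sub continuous_const).norm).continuousOn
    obtain ⟨p, hpmem, hpmax⟩ :=
      hcomp.exists_isMaxOn ⟨x₀, subset_closure hx₀⟩ hcont2
    rw [isMaxOn_iff] at hpmax
    have hpfr : p ∈ frontier Ω := by
      by_contra h
      have hpΩ : p ∈ Ω := by
        rcases (closure_eq_interior_union_frontier Ω ▸ hpmem) with h' | h'
        · rwa [hΩo.interior_eq] at h'
        · exact absurd h' h
      obtain ⟨q, hqΩ, hq⟩ := hnomax p hpΩ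
      exact absurd (hpmax q (subset_closure hqΩ)) (not_le.mpr hq)
    intro x hx
    rw [Metric.mem_ball, dist_eq_norm]
    rcases lt_or_eq_of_le (hpmax x (subset_closure hx)) with h | h
    · rw [← hfr p hpfr]; exact h
    · exfalso
      obtain ⟨q, hqΩ, hq⟩ := hnomax x hx
      have := hpmax q (subset_closure hqΩ)
      rw [← h] at this
      linarith
  have hball2 : Metric.ball x₀ R ⊆ Ω := by
    have hsub2 : Metric.ball x₀ R ⊆ Ω ∪ (closure Ω)ᶜ := by
      intro s hs
      by_cases h : s ∈ closure Ω
      · left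
        rcases (closure_eq_interior_union_frontier Ω ▸ h) with h' | h'
        · rwa [hΩo.interior_eq] at h'
        · exfalso
          have h2 := hfr s h'
          rw [Metric.mem_ball, dist_eq_norm, h2] at hs
          exact lt_irrefl _ hs
      · right; exact h
    have hdisj : Disjoint Ω (closure Ω)ᶜ := by
      rw [Set.disjoint_left]
      intro s hsΩ hsc
      exact hsc (subset_closure hsΩ)
    exact (convex_ball x₀ R).isPreconnected.subset_left_of_subset_union hΩo
      (isOpen_compl_iff.mpr isClosed_closure) hdisj hsub2
      ⟨x₀, Metric.mem_ball_self hRpos, hx₀⟩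
  refine ⟨R, hRpos, Set.Subset.antisymm hsubset hball2, ?_⟩
  intro x hx
  rw [hform x hx]
  rw [hR2]
  ring
end
end

section
/- Let Ω ⊂ ℝ² be a bounded domain and suppose ψ : Ω → ℝ is continuous, vanishes on ∂Ω, attains its maximum at a unique point x₀, and solves the eikonal equation |∇ψ| = 1 on Ω ∖ {x₀} in the classical sense with ψ ∈ C¹(Ω ∖ {x₀}), with all level sets of ψ connected. Then Ω is a disc centered at x₀ and ψ(x) = dist(x, ∂Ω). -/
open MeasureTheory RealInnerProductSpace Bornology Real
open scoped ENNReal NNReal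

open Metric Set Filter Topology

noncomputable section

namespace Stmt6Aux

variable {Ω : Set (En 2)} {ψ : En 2 → ℝ} {x₀ : En 2}

/-- Differentiability at points of `Ω \ {x₀}`. -/
lemma diffAt (hΩo : IsOpen Ω) (hC1 : ContDiffOn ℝ 1 ψ (Ω \ {x₀}))
    {z : En 2} (hz : z ∈ Ω \ {x₀}) : DifferentiableAt ℝ ψ z := by
  have hopen : IsOpen (Ω \ {x₀}) := hΩo.sdiff isClosed_singleton
  exact (hC1.differentiableOn one_ne_zero).differentiableAt (hopen.mem_nhds hz)

lemma fderiv_eq (hΩo : IsOpen Ω) (hC1 : ContDiffOn ℝ 1 ψ (Ω \ {x₀}))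
    {z : En 2} (hz : z ∈ Ω \ {x₀}) :
    fderiv ℝ ψ z = InnerProductSpace.toDual ℝ (En 2) (gradient ψ z) :=
  ((diffAt hΩo hC1 hz).hasGradientAt.hasFDerivAt.fderiv).symm ▸ rfl

lemma norm_fderiv_eq (hΩo : IsOpen Ω) (hC1 : ContDiffOn ℝ 1 ψ (Ω \ {x₀}))
    {z : En 2} (hz : z ∈ Ω \ {x₀}) :
    ‖fderiv ℝ ψ z‖ = ‖gradient ψ z‖ := by
  rw [fderiv_eq hΩo hC1 hz]
  exact (InnerProductSpace.toDual ℝ (En 2)).norm_map _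

lemma fderiv_apply_grad (hΩo : IsOpen Ω) (hC1 : ContDiffOn ℝ 1 ψ (Ω \ {x₀}))
    {z : En 2} (hz : z ∈ Ω \ {x₀}) :
    fderiv ℝ ψ z (gradient ψ z) = ‖gradient ψ z‖ ^ 2 := by
  rw [fderiv_eq hΩo hC1 hz, InnerProductSpace.toDual_apply_apply, real_inner_self_eq_norm_sq]

/-- The frontier of a nonempty bounded open set is nonempty. -/
lemma frontier_nonempty (hΩo : IsOpen Ω) (hΩb : IsBounded Ω) (hx₀ : x₀ ∈ Ω) :
    (frontier Ω).Nonempty := by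
  by_contra h
  rw [not_nonempty_iff_eq_empty] at h
  have hfr : frontier Ω = closure Ω \ Ω := hΩo.frontier_eq
  have hcl : closure Ω ⊆ Ω := by
    intro z hz
    by_contra hzΩ
    exact absurd (h ▸ (hfr ▸ ⟨hz, hzΩ⟩ : z ∈ frontier Ω)) (by simp)
  have : IsClopen Ω := ⟨closure_subset_iff_isClosed.mp hcl, hΩo⟩
  rcases isClopen_iff.mp this with h1 | h2
  · exact absurd (h1 ▸ hx₀) (by simp)
  · exact NormedSpace.unbounded_univ ℝ (En 2) (h2 ▸ hΩb)

/-- The open ball of radius `infDist x (frontier Ω)` around `x ∈ Ω` is contained in `Ω`. -/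
lemma ball_infDist_subset (hΩo : IsOpen Ω) {x : En 2} (hx : x ∈ Ω) :
    ball x (infDist x (frontier Ω)) ⊆ Ω := by
  intro w hw
  by_contra hwΩ
  -- the segment from x to w meets the frontier
  have hseg : ∃ p ∈ segment ℝ x w, p ∈ frontier Ω := by
    by_contra hp
    push_neg at hp
    have hsub : segment ℝ x w ⊆ Ω ∪ (closure Ω)ᶜ := by
      intro p hpseg
      rcases em (p ∈ Ω) with h1 | h1
      · exact Or.inl h1
      · refine Or.inr fun hpc => hp p hpseg ?_
        rw [hΩo.frontier_eq]; exact ⟨hpc, h1⟩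
    have hdisj : Disjoint Ω (closure Ω)ᶜ :=
      Set.disjoint_compl_right_iff_subset.mpr subset_closure
    rcases (convex_segment x w).isPreconnected.subset_or_subset hΩo
        (isClosed_closure.isOpen_compl) hdisj hsub with hc | hc
    · have : w ∈ Ω := hc (right_mem_segment ℝ x w)
      exact hwΩ this
    · have : x ∈ (closure Ω)ᶜ := hc (left_mem_segment ℝ x w)
      exact this (subset_closure hx)
  obtain ⟨p, hpseg, hpfr⟩ := hseg
  have hd : dist x p ≤ dist x w := by
    obtain ⟨a, b, ha, hb, hab, rfl⟩ := hpseg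
    have : a • x + b • w - x = b • (w - x) := by
      rw [show a = 1 - b by linarith]; module
    rw [dist_eq_norm, dist_eq_norm]
    calc ‖x - (a • x + b • w)‖ = ‖a • x + b • w - x‖ := by rw [norm_sub_rev]
    _ = ‖b • (w - x)‖ := by rw [this]
    _ = b * ‖w - x‖ := by rw [norm_smul, Real.norm_eq_abs, abs_of_nonneg hb]
    _ ≤ 1 * ‖w - x‖ := by
        apply mul_le_mul_of_nonneg_right _ (norm_nonneg _)
        linarith
    _ = ‖x - w‖ := by rw [one_mul, norm_sub_rev]
  have h1 : infDist x (frontier Ω) ≤ dist x p := infDist_le_dist_of_mem hpfr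
  have h2 : dist x w < infDist x (frontier Ω) := by
    rw [mem_ball, dist_comm] at hw; exact hw
  linarith

lemma infDist_frontier_pos (hΩo : IsOpen Ω) (hΩb : IsBounded Ω) (hx₀ : x₀ ∈ Ω)
    {x : En 2} (hx : x ∈ Ω) : 0 < infDist x (frontier Ω) := by
  rcases (infDist_nonneg : (0:ℝ) ≤ infDist x (frontier Ω)).lt_or_eq with h | h
  · exact h
  · exfalso
    have hne := frontier_nonempty hΩo hΩb hx₀
    have : x ∈ frontier Ω := (isClosed_frontier.mem_iff_infDist_zero hne).mpr h.symm
    rw [hΩo.frontier_eq] at this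
    exact this.2 hx


/-- `ψ x₀` is positive. -/
lemma psi_x0_pos (hΩo : IsOpen Ω) (hΩb : IsBounded Ω) (hx₀ : x₀ ∈ Ω)
    (hbd : ∀ x ∈ frontier Ω, ψ x = 0)
    (hmax : ∀ x ∈ closure Ω, x ≠ x₀ → ψ x < ψ x₀) : 0 < ψ x₀ := by
  obtain ⟨p, hp⟩ := frontier_nonempty hΩo hΩb hx₀
  have hpcl : p ∈ closure Ω := frontier_subset_closure hp
  have hpx : p ≠ x₀ := by
    intro h
    rw [hΩo.frontier_eq] at hp
    exact hp.2 (h ▸ hx₀)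
  have := hmax p hpcl hpx
  rw [hbd p hp] at this
  exact this

/-- The minimum principle: `ψ > 0` on `Ω`. -/
lemma psi_pos (hΩo : IsOpen Ω) (hΩb : IsBounded Ω)
    (hcont : ContinuousOn ψ (closure Ω)) (hbd : ∀ x ∈ frontier Ω, ψ x = 0)
    (hx₀ : x₀ ∈ Ω) (hmax : ∀ x ∈ closure Ω, x ≠ x₀ → ψ x < ψ x₀)
    (hC1 : ContDiffOn ℝ 1 ψ (Ω \ {x₀})) (heik : ∀ x ∈ Ω \ {x₀}, ‖gradient ψ x‖ = 1)
    {z : En 2} (hz : z ∈ Ω) : 0 < ψ z := by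
  have hM : 0 < ψ x₀ := psi_x0_pos hΩo hΩb hx₀ hbd hmax
  by_contra hzneg
  push_neg at hzneg
  -- interior local minima are impossible
  have nomin : ∀ w ∈ Ω, IsMinOn ψ (closure Ω) w → ψ w ≤ 0 → False := by
    intro w hwΩ hwmin hwle
    have hwx : w ≠ x₀ := fun h => by rw [h] at hwle; linarith
    have hloc : IsLocalMin ψ w :=
      hwmin.isLocalMin (mem_of_superset (hΩo.mem_nhds hwΩ) subset_closure)
    have h0 : fderiv ℝ ψ w = 0 := hloc.fderiv_eq_zero
    have h1 : ‖gradient ψ w‖ = 1 := heik w ⟨hwΩ, hwx⟩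
    have h2 : ‖fderiv ℝ ψ w‖ = ‖gradient ψ w‖ := norm_fderiv_eq hΩo hC1 ⟨hwΩ, hwx⟩
    rw [h0, h1] at h2
    simp at h2
  -- global minimum over the compact closure
  have hcpt : IsCompact (closure Ω) := hΩb.isCompact_closure
  obtain ⟨w, hwcl, hwmin⟩ := hcpt.exists_isMinOn ⟨x₀, subset_closure hx₀⟩ hcont
  have hwle : ψ w ≤ 0 := le_trans (hwmin (subset_closure hz)) hzneg
  rcases em (w ∈ Ω) with hwΩ | hwΩ
  · exact nomin w hwΩ hwmin hwle
  · -- w is on the frontier, so min value is 0, and z itself is a minimum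
    have hwfr : w ∈ frontier Ω := by rw [hΩo.frontier_eq]; exact ⟨hwcl, hwΩ⟩
    have hw0 : ψ w = 0 := hbd w hwfr
    have hz0 : ψ z = 0 := le_antisymm hzneg (hw0 ▸ hwmin (subset_closure hz))
    have hzmin : IsMinOn ψ (closure Ω) z := by
      intro y hy
      have := hwmin hy
      simp only [Set.mem_setOf_eq] at this ⊢
      rw [hz0, ← hw0]
      exact this
    exact nomin z hz hzmin (le_of_eq hz0)

/-- 1-Lipschitz bound on a closed segment avoiding `x₀` inside `Ω`. -/
lemma lip_on_seg (hΩo : IsOpen Ω)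
    (hC1 : ContDiffOn ℝ 1 ψ (Ω \ {x₀})) (heik : ∀ x ∈ Ω \ {x₀}, ‖gradient ψ x‖ = 1)
    {a b : En 2} (hseg : segment ℝ a b ⊆ Ω \ {x₀}) : ‖ψ b - ψ a‖ ≤ ‖b - a‖ := by
  have := Convex.norm_image_sub_le_of_norm_fderiv_le
    (𝕜 := ℝ) (f := ψ) (C := 1) (s := segment ℝ a b)
    (fun z hz => diffAt hΩo hC1 (hseg hz))
    (fun z hz => by rw [norm_fderiv_eq hΩo hC1 (hseg hz), heik z (hseg hz)])
    (convex_segment a b) (left_mem_segment ℝ a b) (right_mem_segment ℝ a b)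
  simpa using this


/-- 1-Lipschitz bound when only the open segment avoids `x₀` and lies in `Ω`,
with endpoints in the closure. -/
lemma lip_open_seg (hΩo : IsOpen Ω) (hcont : ContinuousOn ψ (closure Ω))
    (hC1 : ContDiffOn ℝ 1 ψ (Ω \ {x₀})) (heik : ∀ x ∈ Ω \ {x₀}, ‖gradient ψ x‖ = 1)
    {a b : En 2} (ha : a ∈ closure Ω) (hb : b ∈ closure Ω)
    (hseg : openSegment ℝ a b ⊆ Ω \ {x₀}) : ‖ψ b - ψ a‖ ≤ ‖b - a‖ := by
  rcases eq_or_ne a b with rfl | hab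
  · simp
  have hnrm : (0:ℝ) < ‖b - a‖ := by
    rw [norm_pos_iff, sub_ne_zero]; exact fun h => hab h.symm
  set γ : ℝ → En 2 := fun u => a + u • (b - a) with hγ
  have hγmem : ∀ u ∈ Ioo (0:ℝ) 1, γ u ∈ openSegment ℝ a b := by
    intro u hu
    rw [openSegment_eq_image' ℝ a b]
    exact ⟨u, hu, rfl⟩
  refine le_of_forall_pos_le_add fun η hη => ?_
  obtain ⟨δa, hδa, hA⟩ := Metric.continuousWithinAt_iff.mp (hcont a ha) (η/2) (by linarith)
  obtain ⟨δb, hδb, hB⟩ := Metric.continuousWithinAt_iff.mp (hcont b hb) (η/2) (by linarith)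
  set u₁ : ℝ := min (1/2) (δa / (2 * ‖b - a‖)) with hu₁
  set u₂ : ℝ := 1 - min (1/2) (δb / (2 * ‖b - a‖)) with hu₂
  have hpa : 0 < δa / (2 * ‖b - a‖) := by positivity
  have hpb : 0 < δb / (2 * ‖b - a‖) := by positivity
  have hu₁I : u₁ ∈ Ioo (0:ℝ) 1 := ⟨lt_min (by norm_num) hpa,
    lt_of_le_of_lt (min_le_left _ _) (by norm_num)⟩
  have hu₂I : u₂ ∈ Ioo (0:ℝ) 1 := by
    constructor
    · have : min (1/2) (δb / (2 * ‖b - a‖)) ≤ 1/2 := min_le_left _ _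
      simp only [hu₂]; linarith
    · have : 0 < min (1/2) (δb / (2 * ‖b - a‖)) := lt_min (by norm_num) hpb
      simp only [hu₂]; linarith
  have h12 : u₁ ≤ u₂ := by
    have h1 : u₁ ≤ 1/2 := min_le_left _ _
    have h2 : min (1/2) (δb / (2 * ‖b - a‖)) ≤ 1/2 := min_le_left _ _
    simp only [hu₂]; linarith
  -- the segment between γ u₁ and γ u₂ is inside the open segment
  have hsub : segment ℝ (γ u₁) (γ u₂) ⊆ Ω \ {x₀} := by
    intro p hp
    obtain ⟨c, d, hc, hd, hcd, rfl⟩ := hp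
    have : c • γ u₁ + d • γ u₂ = γ (c * u₁ + d * u₂) := by
      simp only [hγ, smul_add, smul_smul]
      rw [show c = 1 - d by linarith]
      module
    rw [this]
    refine hseg (hγmem _ ⟨?_, ?_⟩)
    · have : c * u₁ + d * u₂ ≥ (c + d) * u₁ := by nlinarith [hu₁I.1.le, hu₂I.1.le]
      nlinarith [hu₁I.1]
    · have : c * u₁ + d * u₂ ≤ (c + d) * u₂ := by nlinarith
      nlinarith [hu₂I.2]
  have hl : ‖ψ (γ u₂) - ψ (γ u₁)‖ ≤ ‖b - a‖ := by
    have hlip := lip_on_seg hΩo hC1 heik hsub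
    have heq : γ u₂ - γ u₁ = (u₂ - u₁) • (b - a) := by simp only [hγ]; module
    rw [heq, norm_smul, Real.norm_eq_abs (u₂ - u₁),
      abs_of_nonneg (by linarith : (0:ℝ) ≤ u₂ - u₁)] at hlip
    calc ‖ψ (γ u₂) - ψ (γ u₁)‖ ≤ (u₂ - u₁) * ‖b - a‖ := hlip
    _ ≤ 1 * ‖b - a‖ := by
        apply mul_le_mul_of_nonneg_right _ (norm_nonneg _)
        have := hu₂I.2; have := hu₁I.1; linarith
    _ = ‖b - a‖ := one_mul _
  have hg1cl : γ u₁ ∈ closure Ω := subset_closure (hseg (hγmem _ hu₁I)).1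
  have hg2cl : γ u₂ ∈ closure Ω := subset_closure (hseg (hγmem _ hu₂I)).1
  have hda : dist (ψ (γ u₁)) (ψ a) < η/2 := by
    apply hA hg1cl
    have : γ u₁ - a = u₁ • (b - a) := by simp only [hγ]; module
    rw [dist_eq_norm, this, norm_smul, Real.norm_eq_abs u₁, abs_of_nonneg hu₁I.1.le]
    have h1 : u₁ ≤ δa / (2 * ‖b - a‖) := min_le_right _ _
    have h2 : u₁ * (2 * ‖b - a‖) ≤ δa := (le_div_iff₀ (by positivity)).mp h1
    nlinarith [hu₁I.1.le, hnrm]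
  have hdb : dist (ψ (γ u₂)) (ψ b) < η/2 := by
    apply hB hg2cl
    have : γ u₂ - b = (1 - u₂) • (a - b) := by
      simp only [hγ, hu₂]; module
    rw [dist_eq_norm, this, norm_smul, Real.norm_eq_abs (1 - u₂),
      abs_of_nonneg (by have := hu₂I.2; linarith : (0:ℝ) ≤ 1 - u₂), norm_sub_rev a b]
    have h1 : 1 - u₂ ≤ δb / (2 * ‖b - a‖) := by simp only [hu₂]; simpa using min_le_right _ _
    have h2 : (1 - u₂) * (2 * ‖b - a‖) ≤ δb := (le_div_iff₀ (by positivity)).mp h1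
    nlinarith [hu₂I.2.le, hnrm]
  calc ‖ψ b - ψ a‖ ≤ ‖ψ b - ψ (γ u₂)‖ + ‖ψ (γ u₂) - ψ (γ u₁)‖ + ‖ψ (γ u₁) - ψ a‖ := by
        have := norm_sub_le_norm_sub_add_norm_sub (ψ b) (ψ (γ u₂)) (ψ a)
        have h2 := norm_sub_le_norm_sub_add_norm_sub (ψ (γ u₂)) (ψ (γ u₁)) (ψ a)
        linarith
  _ ≤ η/2 + ‖b - a‖ + η/2 := by
      rw [dist_eq_norm] at hda hdb
      rw [norm_sub_rev (ψ b)]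
      linarith [hda, hdb, hl]
  _ = ‖b - a‖ + η := by ring


/-- Upper bound: `ψ x ≤ dist(x, ∂Ω)` on `Ω`. -/
lemma psi_le_infDist (hΩo : IsOpen Ω) (hΩb : IsBounded Ω)
    (hcont : ContinuousOn ψ (closure Ω)) (hbd : ∀ x ∈ frontier Ω, ψ x = 0)
    (hx₀ : x₀ ∈ Ω) (hmax : ∀ x ∈ closure Ω, x ≠ x₀ → ψ x < ψ x₀)
    (hC1 : ContDiffOn ℝ 1 ψ (Ω \ {x₀})) (heik : ∀ x ∈ Ω \ {x₀}, ‖gradient ψ x‖ = 1)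
    {x : En 2} (hx : x ∈ Ω) : ψ x ≤ infDist x (frontier Ω) := by
  have hfrne := frontier_nonempty hΩo hΩb hx₀
  have hfrcpt : IsCompact (frontier Ω) :=
    hΩb.isCompact_closure.of_isClosed_subset isClosed_frontier frontier_subset_closure
  obtain ⟨p, hpfr, hpd⟩ := hfrcpt.exists_infDist_eq_dist hfrne x
  have hdpos : 0 < infDist x (frontier Ω) := infDist_frontier_pos hΩo hΩb hx₀ hx
  have hpx : p ≠ x := by
    intro h
    rw [hΩo.frontier_eq] at hpfr
    exact hpfr.2 (h ▸ hx)
  -- the open segment from x to p lies in Ω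
  have hsegΩ : openSegment ℝ x p ⊆ Ω := by
    intro q hq
    rw [openSegment_eq_image' ℝ x p] at hq
    obtain ⟨t, ht, rfl⟩ := hq
    show x + t • (p - x) ∈ Ω
    apply ball_infDist_subset hΩo hx
    rw [mem_ball, dist_comm, dist_eq_norm]
    have : x - (x + t • (p - x)) = (-t) • (p - x) := by module
    rw [this, norm_smul, Real.norm_eq_abs (-t), abs_neg, abs_of_nonneg ht.1.le]
    have hnp : ‖p - x‖ = infDist x (frontier Ω) := by
      rw [hpd, dist_eq_norm, norm_sub_rev]
    rw [hnp]
    nlinarith [ht.1, ht.2, hdpos]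
  have hpcl : p ∈ closure Ω := frontier_subset_closure hpfr
  have hxcl : x ∈ closure Ω := subset_closure hx
  have hψp : ψ p = 0 := hbd p hpfr
  rcases em (x₀ ∈ openSegment ℝ x p) with hin | hout
  · -- x₀ is on the open segment: split there
    rw [openSegment_eq_image' ℝ x p] at hin
    obtain ⟨t₀, ht₀, hx₀eq'⟩ := hin
    have hx₀eq : x + t₀ • (p - x) = x₀ := hx₀eq'
    have hxx₀ : x ≠ x₀ := by
      intro h
      rw [← h] at hx₀eq
      have : t₀ • (p - x) = 0 := by
        have := hx₀eq
        rw [← sub_eq_zero] at this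
        simpa using this
      rcases smul_eq_zero.mp this with h1 | h1
      · exact absurd h1 (ne_of_gt ht₀.1)
      · rw [sub_eq_zero] at h1
        exact hpx h1
    have hsub : openSegment ℝ x₀ p ⊆ Ω \ {x₀} := by
      intro q hq
      rw [openSegment_eq_image' ℝ x₀ p] at hq
      obtain ⟨s, hs, rfl⟩ := hq
      show x₀ + s • (p - x₀) ∈ Ω \ {x₀}
      have hq2 : x₀ + s • (p - x₀) = x + (t₀ + s * (1 - t₀)) • (p - x) := by
        rw [← hx₀eq]; module
      constructor
      · rw [hq2]
        apply hsegΩ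
        rw [openSegment_eq_image' ℝ x p]
        refine ⟨t₀ + s * (1 - t₀), ⟨?_, ?_⟩, rfl⟩
        · nlinarith [ht₀.1, ht₀.2, hs.1, hs.2]
        · nlinarith [ht₀.1, ht₀.2, hs.1, hs.2]
      · simp only [Set.mem_singleton_iff]
        intro h
        have : s • (p - x₀) = 0 := by
          rw [← sub_eq_zero] at h
          simpa using h
        rcases smul_eq_zero.mp this with h1 | h1
        · exact absurd h1 (ne_of_gt hs.1)
        · rw [sub_eq_zero] at h1
          -- then p = x₀ = x + t₀ (p - x), so (1-t₀)(p-x) = 0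
          have hxp : x + t₀ • (p - x) = p := by rw [hx₀eq, ← h1]
          have h0 : x + t₀ • (p - x) - p = 0 := by rw [hxp]; simp
          have h2 : (1 - t₀) • (p - x) = -(x + t₀ • (p - x) - p) := by module
          rw [h0, neg_zero] at h2
          rcases smul_eq_zero.mp h2 with h3 | h3
          · have : t₀ = 1 := by linarith
            exact absurd this (ne_of_lt ht₀.2)
          · rw [sub_eq_zero] at h3
            exact hpx h3
    have hx₀cl : x₀ ∈ closure Ω := subset_closure hx₀
    have hlip := lip_open_seg hΩo hcont hC1 heik hx₀cl hpcl hsub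
    rw [hψp] at hlip
    have h1 : ψ x < ψ x₀ := hmax x hxcl hxx₀
    have h2 : ψ x₀ ≤ ‖p - x₀‖ := by
      calc ψ x₀ ≤ |0 - ψ x₀| := by rw [zero_sub, abs_neg, abs_of_pos (psi_x0_pos hΩo hΩb hx₀ hbd hmax)]
      _ ≤ ‖p - x₀‖ := hlip
    have h3 : ‖p - x₀‖ ≤ ‖p - x‖ := by
      rw [← hx₀eq]
      have : p - (x + t₀ • (p - x)) = (1 - t₀) • (p - x) := by module
      rw [this, norm_smul, Real.norm_eq_abs, abs_of_nonneg (by linarith [ht₀.2] : (0:ℝ) ≤ 1 - t₀)]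
      nlinarith [norm_nonneg (p - x), ht₀.1, ht₀.2]
    have h4 : ‖p - x‖ = infDist x (frontier Ω) := by rw [hpd, dist_eq_norm, norm_sub_rev]
    linarith
  · -- x₀ avoids the segment
    have hsub : openSegment ℝ x p ⊆ Ω \ {x₀} := fun q hq =>
      ⟨hsegΩ hq, fun h => hout ((Set.mem_singleton_iff.mp h) ▸ hq)⟩
    have hlip := lip_open_seg hΩo hcont hC1 heik hxcl hpcl hsub
    rw [hψp] at hlip
    have h4 : ‖p - x‖ = infDist x (frontier Ω) := by rw [hpd, dist_eq_norm, norm_sub_rev]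
    calc ψ x ≤ |0 - ψ x| := le_abs_self _ |>.trans (by rw [zero_sub, abs_neg])
    _ ≤ ‖p - x‖ := hlip
    _ = _ := h4


/-- Core reachability lemma: following `±∇ψ` one can change `ψ` by `T` while moving
at most `T/θ` in space, provided the relevant level sets stay inside `Ω \ {x₀}`. -/
lemma reach (hΩo : IsOpen Ω) (hΩb : IsBounded Ω)
    (hcont : ContinuousOn ψ (closure Ω))
    (hx₀ : x₀ ∈ Ω)
    (hC1 : ContDiffOn ℝ 1 ψ (Ω \ {x₀})) (heik : ∀ x ∈ Ω \ {x₀}, ‖gradient ψ x‖ = 1)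
    {x : En 2} (hx : x ∈ Ω) {θ T c : ℝ} (hθ0 : 0 < θ) (hθ1 : θ < 1) (hT : 0 ≤ T)
    (hc : c = 1 ∨ c = -1)
    (hcontinue : ∀ t ∈ Ico (0:ℝ) T, ∀ z ∈ closure Ω, ψ z = ψ x + c * t → z ∈ Ω \ {x₀}) :
    ∃ z ∈ closure Ω, dist z x ≤ T / θ ∧ ψ z = ψ x + c * T := by
  set S : Set ℝ :=
    {t | t ∈ Icc 0 T ∧ ∃ z ∈ closure Ω, dist z x ≤ t / θ ∧ ψ z = ψ x + c * t} with hS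
  have h0S : (0:ℝ) ∈ S := by
    refine ⟨⟨le_rfl, hT⟩, x, subset_closure hx, ?_, by ring⟩
    simp
  have hbdd : BddAbove S := ⟨T, fun t ht => ht.1.2⟩
  have hne : S.Nonempty := ⟨0, h0S⟩
  -- the supremum is attained
  have hs'mem : sSup S ∈ S := by
    obtain ⟨u, humono, hutend, huS⟩ := exists_seq_tendsto_sSup hne hbdd
    choose z hz1 hz2 hz3 using fun n => (huS n).2
    obtain ⟨a, hacl, φ, hφ, hatend⟩ := (hΩb.isCompact_closure).tendsto_subseq hz1
    have hutend' : Tendsto (u ∘ φ) atTop (𝓝 (sSup S)) := hutend.comp hφ.tendsto_atTop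
    have htendΩ : Tendsto (fun n => z (φ n)) atTop (𝓝[closure Ω] a) :=
      tendsto_nhdsWithin_iff.mpr ⟨hatend, Filter.Eventually.of_forall fun n => hz1 (φ n)⟩
    have hψa : ψ a = ψ x + c * sSup S := by
      have h1 : Tendsto (fun n => ψ (z (φ n))) atTop (𝓝 (ψ a)) :=
        (hcont a hacl).tendsto.comp htendΩ
      have h2 : Tendsto (fun n => ψ (z (φ n))) atTop (𝓝 (ψ x + c * sSup S)) := by
        have : (fun n => ψ (z (φ n))) = fun n => ψ x + c * u (φ n) := by
          funext n; exact hz3 (φ n)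
        rw [this]
        exact tendsto_const_nhds.add (hutend'.const_mul c)
      exact tendsto_nhds_unique h1 h2
    have hda : dist a x ≤ sSup S / θ := by
      refine le_of_tendsto_of_tendsto (hatend.dist tendsto_const_nhds)
        (hutend'.div_const θ) (Filter.Eventually.of_forall fun n => hz2 (φ n))
    have hIcc : sSup S ∈ Icc (0:ℝ) T :=
      ⟨le_csSup hbdd h0S, csSup_le hne fun t ht => ht.1.2⟩
    exact ⟨hIcc, a, hacl, hda, hψa⟩
  obtain ⟨⟨hs0, hsT⟩, z, hzcl, hzd, hzψ⟩ := hs'mem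
  rcases eq_or_lt_of_le hsT with heq | hlt
  · exact ⟨z, hzcl, by rwa [heq] at hzd, by rwa [heq] at hzψ⟩
  exfalso
  have hzΩ : z ∈ Ω \ {x₀} := hcontinue (sSup S) ⟨hs0, hlt⟩ z hzcl hzψ
  have hg : ‖gradient ψ z‖ = 1 := heik z hzΩ
  have hdiff := diffAt hΩo hC1 hzΩ
  set e : En 2 := c • gradient ψ z with he_def
  have he : ‖e‖ = 1 := by
    rcases hc with rfl | rfl <;> simp [he_def, norm_smul, hg]
  have hline : HasDerivAt (fun s : ℝ => z + s • e) e 0 := by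
    simpa using ((hasDerivAt_id (0:ℝ)).smul_const e).const_add z
  have hval : fderiv ℝ ψ z e = c := by
    have h1 : fderiv ℝ ψ z (gradient ψ z) = 1 := by
      rw [fderiv_apply_grad hΩo hC1 hzΩ, hg]; norm_num
    rw [he_def, ContinuousLinearMap.map_smul, h1, smul_eq_mul, mul_one]
  have hφd : HasDerivAt (fun s : ℝ => ψ (z + s • e)) c 0 := by
    have hL : HasFDerivAt ψ (fderiv ℝ ψ z) (z + (0:ℝ) • e) := by
      simpa using hdiff.hasFDerivAt
    have := hL.comp_hasDerivAt 0 hline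
    rw [hval] at this
    exact this
  have hslope : Tendsto (slope (fun s : ℝ => ψ (z + s • e)) 0) (𝓝[>] 0) (𝓝 c) :=
    (hasDerivAt_iff_tendsto_slope.mp hφd).mono_left
      (nhdsWithin_mono 0 fun s hs => ne_of_gt hs)
  have hdz : 0 < infDist z (frontier Ω) := infDist_frontier_pos hΩo hΩb hx₀ hzΩ.1
  set r : ℝ := min (infDist z (frontier Ω)) ((T - sSup S) / θ) with hr_def
  have hr : 0 < r := lt_min hdz (div_pos (by linarith) hθ0)
  have E1 : ∀ᶠ s in 𝓝[>] (0:ℝ),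
      |slope (fun s : ℝ => ψ (z + s • e)) 0 s - c| < 1 - θ := by
    have := Metric.tendsto_nhds.mp hslope (1 - θ) (by linarith)
    filter_upwards [this] with s hs
    rwa [Real.dist_eq] at hs
  have E2 : ∀ᶠ s in 𝓝[>] (0:ℝ), s ∈ Ioo (0:ℝ) r :=
    Ioo_mem_nhdsGT_of_mem ⟨le_rfl, hr⟩
  obtain ⟨s, hs1, hs2⟩ := (E1.and E2).exists
  have hs0' : 0 < s := hs2.1
  -- the segment stays in Ω
  have hmap : ∀ σ ∈ Icc (0:ℝ) s, z + σ • e ∈ Ω := by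
    intro σ hσ
    apply ball_infDist_subset hΩo hzΩ.1
    rw [mem_ball, dist_eq_norm]
    have : z + σ • e - z = σ • e := by module
    rw [this, norm_smul, Real.norm_eq_abs σ, abs_of_nonneg hσ.1, he, mul_one]
    exact lt_of_le_of_lt hσ.2 (lt_of_lt_of_le hs2.2 (min_le_left _ _))
  have hφcont : ContinuousOn (fun σ : ℝ => ψ (z + σ • e)) (Icc 0 s) := by
    apply hcont.comp
    · exact (continuous_const.add (continuous_id.smul continuous_const)).continuousOn
    · exact fun σ hσ => subset_closure (hmap σ hσ)
  have hφ0 : ψ (z + (0:ℝ) • e) = ψ x + c * sSup S := by simpa using hzψ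
  have hslope_eq : slope (fun s : ℝ => ψ (z + s • e)) 0 s
      = (ψ (z + s • e) - ψ (z + (0:ℝ) • e)) / s := by
    rw [slope_def_field]; ring_nf
  -- find an exact intermediate value point
  have hIVT : ∃ σ ∈ Icc (0:ℝ) s, ψ (z + σ • e) = ψ x + c * (sSup S + θ * s) := by
    rcases hc with rfl | rfl
    · have hgt : ψ x + 1 * (sSup S + θ * s) ≤ ψ (z + s • e) := by
        have habs := abs_lt.mp hs1
        rw [hslope_eq] at habs
        have h2 : θ < (ψ (z + s • e) - ψ (z + (0:ℝ) • e)) / s := by linarith [habs.1]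
        have h3 : θ * s < ψ (z + s • e) - ψ (z + (0:ℝ) • e) := by
          have := (lt_div_iff₀ hs0').mp h2; linarith
        have := hφ0
        linarith
      have : ψ x + 1 * (sSup S + θ * s) ∈ Icc (ψ (z + (0:ℝ) • e)) (ψ (z + s • e)) := by
        refine ⟨by rw [hφ0]; nlinarith, hgt⟩
      obtain ⟨σ, hσ, hσv⟩ := intermediate_value_Icc hs0'.le hφcont this
      exact ⟨σ, hσ, hσv⟩
    · have hlt' : ψ (z + s • e) ≤ ψ x + (-1) * (sSup S + θ * s) := by
        have habs := abs_lt.mp hs1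
        rw [hslope_eq] at habs
        have h2 : (ψ (z + s • e) - ψ (z + (0:ℝ) • e)) / s < -θ := by linarith [habs.2]
        have h3 : ψ (z + s • e) - ψ (z + (0:ℝ) • e) < -θ * s := by
          have := (div_lt_iff₀ hs0').mp h2; linarith
        have := hφ0
        linarith
      have : ψ x + (-1) * (sSup S + θ * s) ∈ Icc (ψ (z + s • e)) (ψ (z + (0:ℝ) • e)) := by
        refine ⟨hlt', by rw [hφ0]; nlinarith⟩
      obtain ⟨σ, hσ, hσv⟩ := intermediate_value_Icc' hs0'.le hφcont this
      exact ⟨σ, hσ, hσv⟩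
  obtain ⟨σ, hσIcc, hσval⟩ := hIVT
  -- the new time sSup S + θ s belongs to S, contradicting the sup
  have hsθT : sSup S + θ * s ≤ T := by
    have h1 : s ≤ (T - sSup S) / θ := (lt_of_lt_of_le hs2.2 (min_le_right _ _)).le
    have := (le_div_iff₀ hθ0).mp h1
    linarith
  have hmem : sSup S + θ * s ∈ S := by
    refine ⟨⟨by positivity, hsθT⟩, z + σ • e, subset_closure (hmap σ hσIcc), ?_, hσval⟩
    have hd1 : dist (z + σ • e) x ≤ dist (z + σ • e) z + dist z x := dist_triangle _ _ _
    have hd2 : dist (z + σ • e) z ≤ s := by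
      rw [dist_eq_norm]
      have : z + σ • e - z = σ • e := by module
      rw [this, norm_smul, Real.norm_eq_abs σ, abs_of_nonneg hσIcc.1, he, mul_one]
      exact hσIcc.2
    have : s + sSup S / θ = (sSup S + θ * s) / θ := by field_simp; ring
    linarith
  have := le_csSup hbdd hmem
  nlinarith


/-- Descent: `dist(x, ∂Ω) ≤ ψ x` for `x ∈ Ω`, `x ≠ x₀`. -/
lemma infDist_le_psi (hΩo : IsOpen Ω) (hΩb : IsBounded Ω)
    (hcont : ContinuousOn ψ (closure Ω)) (hbd : ∀ x ∈ frontier Ω, ψ x = 0)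
    (hx₀ : x₀ ∈ Ω) (hmax : ∀ x ∈ closure Ω, x ≠ x₀ → ψ x < ψ x₀)
    (hC1 : ContDiffOn ℝ 1 ψ (Ω \ {x₀})) (heik : ∀ x ∈ Ω \ {x₀}, ‖gradient ψ x‖ = 1)
    {x : En 2} (hx : x ∈ Ω) (hxx₀ : x ≠ x₀) : infDist x (frontier Ω) ≤ ψ x := by
  have hψx : 0 < ψ x := psi_pos hΩo hΩb hcont hbd hx₀ hmax hC1 heik hx
  have key : ∀ θ : ℝ, 0 < θ → θ < 1 → infDist x (frontier Ω) * θ ≤ ψ x := by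
    intro θ h0 h1
    have hcontinue : ∀ t ∈ Ico (0:ℝ) (ψ x), ∀ z ∈ closure Ω,
        ψ z = ψ x + (-1) * t → z ∈ Ω \ {x₀} := by
      intro t ht z hzcl hzψ
      have hψz : 0 < ψ z := by rw [hzψ]; linarith [ht.2]
      have hzΩ : z ∈ Ω := by
        by_contra hzΩ
        have : z ∈ frontier Ω := by rw [hΩo.frontier_eq]; exact ⟨hzcl, hzΩ⟩
        rw [hbd z this] at hψz; linarith
      refine ⟨hzΩ, fun hz => ?_⟩
      rw [Set.mem_singleton_iff] at hz
      have h2 : ψ x < ψ x₀ := hmax x (subset_closure hx) hxx₀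
      rw [hz] at hzψ
      linarith [ht.1, h2]
    obtain ⟨z, hzcl, hzd, hzψ⟩ := reach hΩo hΩb hcont hx₀ hC1 heik hx h0 h1 hψx.le
      (Or.inr rfl) hcontinue
    have hz0 : ψ z = 0 := by rw [hzψ]; ring
    have hzfr : z ∈ frontier Ω := by
      rw [hΩo.frontier_eq]
      refine ⟨hzcl, fun hzΩ => ?_⟩
      exact absurd hz0 (ne_of_gt (psi_pos hΩo hΩb hcont hbd hx₀ hmax hC1 heik hzΩ))
    have h3 : infDist x (frontier Ω) ≤ dist x z := infDist_le_dist_of_mem hzfr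
    rw [dist_comm] at h3
    have h4 : dist z x ≤ ψ x / θ := hzd
    calc infDist x (frontier Ω) * θ ≤ (ψ x / θ) * θ := by nlinarith
    _ = ψ x := by field_simp
  by_contra hcon
  push_neg at hcon
  set D := infDist x (frontier Ω) with hD
  have hDpos : 0 < D := infDist_frontier_pos hΩo hΩb hx₀ hx
  have hθ : (0:ℝ) < (ψ x + D) / (2 * D) ∧ (ψ x + D) / (2 * D) < 1 := by
    constructor
    · positivity
    · rw [div_lt_one (by positivity)]; linarith
  have := key _ hθ.1 hθ.2
  rw [mul_div_assoc'] at this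
  rw [div_le_iff₀ (by positivity : (0:ℝ) < 2 * D)] at this
  nlinarith

/-- Near-maximum points are near `x₀`. -/
lemma near_max (hΩb : IsBounded Ω) (hcont : ContinuousOn ψ (closure Ω))
    (hx₀ : x₀ ∈ Ω) (hmax : ∀ x ∈ closure Ω, x ≠ x₀ → ψ x < ψ x₀)
    {δ : ℝ} (hδ : 0 < δ) :
    ∃ ε > 0, ∀ z ∈ closure Ω, ψ x₀ - ε ≤ ψ z → dist z x₀ ≤ δ := by
  set K := closure Ω ∩ {z : En 2 | δ ≤ dist z x₀} with hK
  have hKcpt : IsCompact K := (hΩb.isCompact_closure).inter_right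
    (isClosed_le continuous_const (continuous_id.dist continuous_const))
  rcases eq_empty_or_nonempty K with hKe | hKne
  · refine ⟨1, one_pos, fun z hzcl _ => ?_⟩
    by_contra hd
    push_neg at hd
    have : z ∈ K := ⟨hzcl, hd.le⟩
    rw [hKe] at this
    exact this
  · obtain ⟨w, hwK, hwmax⟩ := hKcpt.exists_isMaxOn hKne
      (hcont.mono (Set.inter_subset_left))
    have hwx₀ : w ≠ x₀ := by
      intro h
      have := hwK.2
      rw [h] at this
      simp only [Set.mem_setOf_eq, dist_self] at this
      linarith
    have hw : ψ w < ψ x₀ := hmax w hwK.1 hwx₀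
    refine ⟨(ψ x₀ - ψ w) / 2, by linarith, fun z hzcl hz => ?_⟩
    by_contra hd
    push_neg at hd
    have hzK : z ∈ K := ⟨hzcl, hd.le⟩
    have := hwmax hzK
    simp only [Set.mem_setOf_eq] at this
    linarith

/-- Climb: `dist x x₀ ≤ ψ x₀ - ψ x` for `x ∈ Ω`. -/
lemma dist_le_psi (hΩo : IsOpen Ω) (hΩb : IsBounded Ω)
    (hcont : ContinuousOn ψ (closure Ω)) (hbd : ∀ x ∈ frontier Ω, ψ x = 0)
    (hx₀ : x₀ ∈ Ω) (hmax : ∀ x ∈ closure Ω, x ≠ x₀ → ψ x < ψ x₀)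
    (hC1 : ContDiffOn ℝ 1 ψ (Ω \ {x₀})) (heik : ∀ x ∈ Ω \ {x₀}, ‖gradient ψ x‖ = 1)
    {x : En 2} (hx : x ∈ Ω) : dist x x₀ ≤ ψ x₀ - ψ x := by
  rcases eq_or_ne x x₀ with rfl | hxx
  · simp
  have hψx : 0 < ψ x := psi_pos hΩo hΩb hcont hbd hx₀ hmax hC1 heik hx
  have hψxM : ψ x < ψ x₀ := hmax x (subset_closure hx) hxx
  refine le_of_forall_pos_le_add fun η hη => ?_
  obtain ⟨ε, hεpos, hεnear⟩ := near_max hΩb hcont hx₀ hmax (by linarith : (0:ℝ) < η/2)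
  rcases le_or_gt (ψ x₀ - ε) (ψ x) with hcase | hcase
  · have := hεnear x (subset_closure hx) hcase
    linarith
  · set T := ψ x₀ - ε - ψ x with hT_def
    have hT : 0 < T := by simp only [hT_def]; linarith
    set θ := T / (T + η/2) with hθ_def
    have hθ0 : 0 < θ := by positivity
    have hθ1 : θ < 1 := by
      rw [hθ_def, div_lt_one (by linarith)]; linarith
    have hcontinue : ∀ t ∈ Ico (0:ℝ) T, ∀ z ∈ closure Ω,
        ψ z = ψ x + 1 * t → z ∈ Ω \ {x₀} := by
      intro t ht z hzcl hzψ
      have hψz : 0 < ψ z := by rw [hzψ]; linarith [ht.1]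
      have hzΩ : z ∈ Ω := by
        by_contra hzΩ
        have : z ∈ frontier Ω := by rw [hΩo.frontier_eq]; exact ⟨hzcl, hzΩ⟩
        rw [hbd z this] at hψz; linarith
      refine ⟨hzΩ, fun hz => ?_⟩
      rw [Set.mem_singleton_iff] at hz
      rw [hz] at hzψ
      have := ht.2
      simp only [hT_def] at this
      linarith [hzψ, this]
    obtain ⟨z, hzcl, hzd, hzψ⟩ := reach hΩo hΩb hcont hx₀ hC1 heik hx hθ0 hθ1 hT.le
      (Or.inl rfl) hcontinue
    have hznear : dist z x₀ ≤ η/2 := by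
      apply hεnear z hzcl
      rw [hzψ]
      simp only [hT_def]
      linarith
    have hTθ : T / θ = T + η/2 := by
      rw [hθ_def]
      field_simp
    rw [hTθ] at hzd
    calc dist x x₀ ≤ dist x z + dist z x₀ := dist_triangle _ _ _
    _ ≤ (T + η/2) + η/2 := by rw [dist_comm x z]; linarith
    _ ≤ ψ x₀ - ψ x + η := by simp only [hT_def]; linarith

end Stmt6Aux

/-- If `ψ` is continuous on `Ω̄`, vanishes on `∂Ω`, attains its maximum only
at `x₀`, is `C¹` on `Ω ∖ {x₀}` where it solves the eikonal equation `|∇ψ| = 1`, and all its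
level sets are connected, then `Ω` is a disc centered at `x₀` and `ψ(x) = dist(x, ∂Ω)`. -/
theorem stmt6 (Ω : Set (En 2)) (hΩo : IsOpen Ω) (hΩb : IsBounded Ω) (hΩc : IsConnected Ω)
    (ψ : En 2 → ℝ) (hcont : ContinuousOn ψ (closure Ω))
    (hbd : ∀ x ∈ frontier Ω, ψ x = 0)
    (x₀ : En 2) (hx₀ : x₀ ∈ Ω)
    (hmax : ∀ x ∈ closure Ω, x ≠ x₀ → ψ x < ψ x₀)
    (hC1 : ContDiffOn ℝ 1 ψ (Ω \ {x₀}))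
    (heik : ∀ x ∈ Ω \ {x₀}, ‖gradient ψ x‖ = 1)
    (hlvl : ∀ h : ℝ, IsPreconnected {x ∈ Ω | ψ x = h}) :
    ∃ R > 0, Ω = Metric.ball x₀ R ∧ ∀ x ∈ Ω, ψ x = Metric.infDist x (frontier Ω) := by
  classical
  have hM : 0 < ψ x₀ := Stmt6Aux.psi_x0_pos hΩo hΩb hx₀ hbd hmax
  have hMle : ψ x₀ ≤ Metric.infDist x₀ (frontier Ω) :=
    Stmt6Aux.psi_le_infDist hΩo hΩb hcont hbd hx₀ hmax hC1 heik hx₀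
  have hΩeq : Ω = Metric.ball x₀ (ψ x₀) := by
    apply Set.eq_of_subset_of_subset
    · intro y hy
      rw [Metric.mem_ball]
      have h1 : dist y x₀ ≤ ψ x₀ - ψ y :=
        Stmt6Aux.dist_le_psi hΩo hΩb hcont hbd hx₀ hmax hC1 heik hy
      have h2 : 0 < ψ y := Stmt6Aux.psi_pos hΩo hΩb hcont hbd hx₀ hmax hC1 heik hy
      linarith
    · intro y hy
      apply Stmt6Aux.ball_infDist_subset hΩo hx₀
      rw [Metric.mem_ball] at hy ⊢
      linarith [hMle]
  refine ⟨ψ x₀, hM, hΩeq, ?_⟩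
  intro y hy
  rcases eq_or_ne y x₀ with rfl | hyx
  · refine le_antisymm (Stmt6Aux.psi_le_infDist hΩo hΩb hcont hbd hx₀ hmax hC1 heik hy) ?_
    have hfr : frontier Ω = Metric.sphere y (ψ y) := by
      rw [hΩeq, frontier_ball y (ne_of_gt hM)]
    set w : En 2 := y + (ψ y) • (EuclideanSpace.single (0 : Fin 2) (1:ℝ)) with hw
    have hwdist : dist w y = ψ y := by
      rw [hw, dist_eq_norm]
      have : y + (ψ y) • EuclideanSpace.single (0:Fin 2) (1:ℝ) - y
          = (ψ y) • EuclideanSpace.single (0:Fin 2) (1:ℝ) := by module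
      rw [this, norm_smul, Real.norm_eq_abs, abs_of_pos hM, EuclideanSpace.norm_single]
      simp
    have hwfr : w ∈ frontier Ω := by rw [hfr]; exact hwdist
    calc Metric.infDist y (frontier Ω) ≤ dist y w := Metric.infDist_le_dist_of_mem hwfr
    _ = ψ y := by rw [dist_comm]; exact hwdist
  · exact le_antisymm (Stmt6Aux.psi_le_infDist hΩo hΩb hcont hbd hx₀ hmax hC1 heik hy)
      (Stmt6Aux.infDist_le_psi hΩo hΩb hcont hbd hx₀ hmax hC1 heik hy hyx)
end
end
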